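/- For the Markov chain (P̃_k) on {0,1,...,n} with P̃_{k+1} | P̃_k = i ~ Binomial(n, i/n), started at P̃_0 = n p_0 (an integer), Pr(P̃_k = 0) ≥ exp(-n p_0 g_k) · (1 - ((n p_0)^2 + n p_0 k)/n · Σ_{m=1}^{k} g_m^2), where g_1 = 1 and g_{j+1} = 1 - exp(-g_j). -/

import Mathlib

open Finset
open Finset

lemma bin_sum (n : ℕ) (x y : ℝ) :
    ∑ j ∈ range (n+1), (n.choose j : ℝ) * x^j * y^(n-j) = (x+y)^n := by
  rw [add_pow]
  exact Finset.sum_congr rfl (fun j _ => by ring)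

lemma bin_sum_mean (n : ℕ) (x y : ℝ) :
    ∑ j ∈ range (n+1), (j:ℝ) * (n.choose j : ℝ) * x^j * y^(n-j)
      = (n:ℝ) * x * (x+y)^(n-1) := by
  cases n with
  | zero => simp
  | succ m =>
    rw [Finset.sum_range_succ']
    simp only [Nat.cast_zero, zero_mul, add_zero, Nat.succ_sub_succ, Nat.sub_zero,
      Nat.add_sub_cancel]
    rw [← bin_sum m x y, Finset.mul_sum]
    apply Finset.sum_congr rfl
    intro i _
    have h := Nat.add_one_mul_choose_eq m i
    have hc : ((m:ℝ)+1) * (m.choose i : ℝ) = ((m+1).choose (i+1) : ℝ) * ((i:ℝ)+1) := by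
      exact_mod_cast congrArg (Nat.cast (R := ℝ)) h
    push_cast
    linear_combination (-(x^(i+1) * y^(m-i))) * hc

lemma bin_sum_sq (n : ℕ) (x y : ℝ) :
    ∑ j ∈ range (n+1), (j:ℝ) * ((j:ℝ)-1) * (n.choose j : ℝ) * x^j * y^(n-j)
      = (n:ℝ) * ((n:ℝ)-1) * x^2 * (x+y)^(n-2) := by
  cases n with
  | zero => simp
  | succ m =>
    rw [Finset.sum_range_succ']
    simp only [Nat.cast_zero, zero_mul, add_zero, Nat.succ_sub_succ, Nat.sub_zero,
      Nat.add_sub_cancel, zero_sub, mul_zero, zero_mul]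
    have key : ∑ i ∈ range (m+1), ((i:ℝ)+1) * (((i:ℝ)+1)-1) * ((m+1).choose (i+1) : ℝ)
        * x^(i+1) * y^(m-i)
        = ((m:ℝ)+1) * x * ∑ i ∈ range (m+1), (i:ℝ) * (m.choose i : ℝ) * x^i * y^(m-i) := by
      rw [Finset.mul_sum]
      apply Finset.sum_congr rfl
      intro i _
      have h := Nat.add_one_mul_choose_eq m i
      have hc : ((m:ℝ)+1) * (m.choose i : ℝ) = ((m+1).choose (i+1) : ℝ) * ((i:ℝ)+1) := by
        exact_mod_cast congrArg (Nat.cast (R := ℝ)) h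
      linear_combination (-((i:ℝ) * x^(i+1) * y^(m-i))) * hc
    push_cast
    rw [key, bin_sum_mean m x y]
    cases m with
    | zero => simp
    | succ m' =>
      push_cast
      ring
open Finset

lemma pointwise_key (x : ℝ) (hx0 : 0 ≤ x) (hx1 : x ≤ 1) (n : ℕ) :
    Real.exp (-((n:ℝ)*x)) * (1 - (n:ℝ)*x^2) ≤ (1-x)^n := by
  have hx2 : x^2 ≤ 1 := by nlinarith
  have h1 : 1 - (n:ℝ)*x^2 ≤ (1-x^2)^n := by
    have := one_add_mul_le_pow (a := -x^2) (by nlinarith) n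
    calc 1 - (n:ℝ)*x^2 = 1 + (n:ℝ)*(-x^2) := by ring
    _ ≤ (1 + -x^2)^n := this
    _ = (1-x^2)^n := by ring_nf
  have h2 : Real.exp (-x) * (1-x^2) ≤ 1-x := by
    have hE : 0 ≤ Real.exp (-x) * (1-x) :=
      mul_nonneg (Real.exp_pos _).le (sub_nonneg.2 hx1)
    have hmul := mul_le_mul_of_nonneg_left (Real.add_one_le_exp x) hE
    have hee : Real.exp (-x) * Real.exp x = 1 := by
      rw [← Real.exp_add]; simp
    nlinarith [hmul, hee]
  have h3 : (0:ℝ) ≤ Real.exp (-x) * (1-x^2) :=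
    mul_nonneg (Real.exp_pos _).le (by nlinarith)
  calc Real.exp (-((n:ℝ)*x)) * (1 - (n:ℝ)*x^2)
      ≤ Real.exp (-((n:ℝ)*x)) * (1-x^2)^n :=
        mul_le_mul_of_nonneg_left h1 (Real.exp_pos _).le
    _ = (Real.exp (-x) * (1-x^2))^n := by
        rw [mul_pow, ← Real.exp_nat_mul]; ring_nf
    _ ≤ (1-x)^n := pow_le_pow_left₀ h3 h2 n

lemma weier (S : Finset ℕ) (a : ℕ → ℝ) (h0 : ∀ i ∈ S, 0 ≤ a i) (h1 : ∀ i ∈ S, a i ≤ 1) :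
    1 - ∑ i ∈ S, a i ≤ ∏ i ∈ S, (1 - a i) := by
  induction S using Finset.cons_induction with
  | empty => simp
  | cons i S hi ih =>
    rw [Finset.sum_cons, Finset.prod_cons]
    have hS : 1 - ∑ j ∈ S, a j ≤ ∏ j ∈ S, (1 - a j) :=
      ih (fun j hj => h0 j (Finset.mem_cons_of_mem hj))
         (fun j hj => h1 j (Finset.mem_cons_of_mem hj))
    have hai0 : 0 ≤ a i := h0 i (Finset.mem_cons_self i S)
    have hai1 : a i ≤ 1 := h1 i (Finset.mem_cons_self i S)
    have hsum0 : 0 ≤ ∑ j ∈ S, a j :=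
      Finset.sum_nonneg (fun j hj => h0 j (Finset.mem_cons_of_mem hj))
    nlinarith [mul_le_mul_of_nonneg_left hS (sub_nonneg.2 hai1)]

lemma cheb (S : Finset ℕ) (w f h : ℕ → ℝ) (hw : ∀ i ∈ S, 0 ≤ w i)
    (hW : ∑ i ∈ S, w i = 1)
    (hanti : ∀ i ∈ S, ∀ j ∈ S, 0 ≤ (f i - f j) * (h j - h i)) :
    ∑ i ∈ S, w i * (f i * h i) ≤ (∑ i ∈ S, w i * f i) * (∑ i ∈ S, w i * h i) := by
  have key : (∑ i ∈ S, w i * f i) * (∑ i ∈ S, w i * h i) - (∑ i ∈ S, w i * (f i * h i))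
      = (1/2) * ∑ i ∈ S, ∑ j ∈ S, (w i * w j) * ((f i - f j) * (h j - h i)) := by
    have inner : ∀ i ∈ S, ∑ j ∈ S, (w i * w j) * ((f i - f j) * (h j - h i))
        = w i * f i * (∑ j ∈ S, w j * h j) + w i * h i * (∑ j ∈ S, w j * f j)
          - w i * (f i * h i) * (∑ j ∈ S, w j) - w i * (∑ j ∈ S, w j * (f j * h j)) := by
      intro i _
      calc ∑ j ∈ S, (w i * w j) * ((f i - f j) * (h j - h i))
          = ∑ j ∈ S, ((w i * f i) * (w j * h j) + (w i * h i) * (w j * f j)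
              - (w i * (f i * h i)) * w j - w i * (w j * (f j * h j))) :=
            Finset.sum_congr rfl (fun j _ => by ring)
        _ = _ := by
            rw [Finset.sum_sub_distrib, Finset.sum_sub_distrib, Finset.sum_add_distrib,
              ← Finset.mul_sum, ← Finset.mul_sum, ← Finset.mul_sum, ← Finset.mul_sum]
    rw [Finset.sum_congr rfl inner, Finset.sum_sub_distrib, Finset.sum_sub_distrib,
      Finset.sum_add_distrib, ← Finset.sum_mul, ← Finset.sum_mul, ← Finset.sum_mul,
      ← Finset.sum_mul, hW]
    ring
  have hpos : 0 ≤ ∑ i ∈ S, ∑ j ∈ S, (w i * w j) * ((f i - f j) * (h j - h i)) :=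
    Finset.sum_nonneg fun i hi => Finset.sum_nonneg fun j hj =>
      mul_nonneg (mul_nonneg (hw i hi) (hw j hj)) (hanti i hi j hj)
  linarith [key, hpos]


set_option maxHeartbeats 1000000 in
theorem binomial_chain_absorption_lower (n : ℕ) (hn : 0 < n) (p₀ : ℝ)
    (hp₀0 : 0 ≤ p₀) (hp₀1 : p₀ ≤ 1) (N : ℕ) (hN : (N : ℝ) = n * p₀)
    (g : ℕ → ℝ) (hg1 : g 1 = 1)
    (hgrec : ∀ k ≥ 1, g (k + 1) = 1 - Real.exp (-(g k)))
    (p : ℕ → ℕ → ℝ)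
    (h0 : ∀ j, p 0 j = if j = N then 1 else 0)
    (hstep : ∀ k j, p (k + 1) j =
      ∑ i ∈ Finset.range (n + 1),
        p k i * ((n.choose j : ℝ) * ((i : ℝ) / n) ^ j * (1 - (i : ℝ) / n) ^ (n - j))) :
    ∀ k : ℕ, 1 ≤ k →
      p k 0 ≥ Real.exp (-(n : ℝ) * p₀ * g k) *
        (1 - (((n : ℝ) * p₀) ^ 2 + (n : ℝ) * p₀ * k) / n * ∑ m ∈ Finset.Icc 1 k, (g m) ^ 2) := by
  have hn' : (0:ℝ) < n := by exact_mod_cast hn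
  have hNn : N ≤ n := by
    have : (N:ℝ) ≤ n := by rw [hN]; nlinarith
    exact_mod_cast this
  have hNR : N ∈ range (n+1) := mem_range.2 (Nat.lt_succ_of_le hNn)
  -- nonnegativity of b
  have hb : ∀ i ∈ range (n+1), ∀ j, 0 ≤ (n.choose j : ℝ) * ((i:ℝ)/n)^j * (1-(i:ℝ)/n)^(n-j) := by
    intro i hi j
    have hi' : (i:ℝ) ≤ n := by exact_mod_cast Nat.lt_succ_iff.1 (mem_range.1 hi)
    have h1 : (0:ℝ) ≤ (i:ℝ)/n := by positivity
    have h2 : (0:ℝ) ≤ 1 - (i:ℝ)/n := by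
      rw [sub_nonneg, div_le_one hn']; exact hi'
    positivity
  have hxle : ∀ i ∈ range (n+1), (i:ℝ)/n ≤ 1 := by
    intro i hi
    have hi' : (i:ℝ) ≤ n := by exact_mod_cast Nat.lt_succ_iff.1 (mem_range.1 hi)
    rw [div_le_one hn']; exact hi'
  have hp : ∀ k j, 0 ≤ p k j := by
    intro k
    induction k with
    | zero => intro j; rw [h0]; split <;> norm_num
    | succ m ih =>
      intro j
      rw [hstep]
      exact sum_nonneg fun i hi => mul_nonneg (ih i) (hb i hi j)
  -- generic transfer
  have htrans : ∀ k (F : ℕ → ℝ), ∑ j ∈ range (n+1), p (k+1) j * F j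
      = ∑ i ∈ range (n+1), p k i *
          (∑ j ∈ range (n+1), ((n.choose j : ℝ) * ((i:ℝ)/n)^j * (1-(i:ℝ)/n)^(n-j)) * F j) := by
    intro k F
    have : ∀ j ∈ range (n+1), p (k+1) j * F j
        = ∑ i ∈ range (n+1), p k i * (((n.choose j : ℝ) * ((i:ℝ)/n)^j * (1-(i:ℝ)/n)^(n-j)) * F j) := by
      intro j _
      rw [hstep, Finset.sum_mul]
      exact sum_congr rfl fun i _ => by ring
    rw [Finset.sum_congr rfl this, Finset.sum_comm]
    exact sum_congr rfl fun i _ => by rw [Finset.mul_sum]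
  have hxy : ∀ i : ℕ, (i:ℝ)/n + (1 - (i:ℝ)/n) = 1 := fun i => by ring
  -- per-state moments
  have fact_mass : ∀ i : ℕ, ∑ j ∈ range (n+1),
      ((n.choose j : ℝ) * ((i:ℝ)/n)^j * (1-(i:ℝ)/n)^(n-j)) * 1 = 1 := by
    intro i
    simp only [mul_one]
    rw [bin_sum, hxy, one_pow]
  have fact_mean : ∀ i : ℕ, ∑ j ∈ range (n+1),
      ((n.choose j : ℝ) * ((i:ℝ)/n)^j * (1-(i:ℝ)/n)^(n-j)) * (j:ℝ) = i := by
    intro i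
    have := bin_sum_mean n ((i:ℝ)/n) (1 - (i:ℝ)/n)
    rw [hxy, one_pow, mul_one] at this
    calc ∑ j ∈ range (n+1), ((n.choose j : ℝ) * ((i:ℝ)/n)^j * (1-(i:ℝ)/n)^(n-j)) * (j:ℝ)
        = ∑ j ∈ range (n+1), (j:ℝ) * (n.choose j : ℝ) * ((i:ℝ)/n)^j * (1-(i:ℝ)/n)^(n-j) :=
          sum_congr rfl fun j _ => by ring
      _ = (n:ℝ) * ((i:ℝ)/n) := this
      _ = i := by field_simp
  have fact_sq : ∀ i ∈ range (n+1), ∑ j ∈ range (n+1),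
      ((n.choose j : ℝ) * ((i:ℝ)/n)^j * (1-(i:ℝ)/n)^(n-j)) * (j:ℝ)^2 ≤ (i:ℝ)^2 + i := by
    intro i _
    have h1 := bin_sum_sq n ((i:ℝ)/n) (1 - (i:ℝ)/n)
    have h2 := bin_sum_mean n ((i:ℝ)/n) (1 - (i:ℝ)/n)
    rw [hxy, one_pow, mul_one] at h1 h2
    have split : ∑ j ∈ range (n+1),
        ((n.choose j : ℝ) * ((i:ℝ)/n)^j * (1-(i:ℝ)/n)^(n-j)) * (j:ℝ)^2
        = (∑ j ∈ range (n+1), (j:ℝ)*((j:ℝ)-1) * (n.choose j : ℝ) * ((i:ℝ)/n)^j * (1-(i:ℝ)/n)^(n-j))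
          + ∑ j ∈ range (n+1), (j:ℝ) * (n.choose j : ℝ) * ((i:ℝ)/n)^j * (1-(i:ℝ)/n)^(n-j) := by
      rw [← Finset.sum_add_distrib]
      exact sum_congr rfl fun j _ => by ring
    rw [split, h1, h2]
    have e1 : (n:ℝ) * ((i:ℝ)/n) = i := by field_simp
    have e2 : (n:ℝ)*((n:ℝ)-1)*((i:ℝ)/n)^2 ≤ (i:ℝ)^2 := by
      have : (n:ℝ)*((n:ℝ)-1)*((i:ℝ)/n)^2 = (i:ℝ)^2 * (((n:ℝ)-1)/n) := by
        field_simp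
      rw [this]
      have hle : ((n:ℝ)-1)/n ≤ 1 := by
        rw [div_le_one hn']; linarith
      nlinarith [sq_nonneg (i:ℝ)]
    linarith
  have fact_mgf : ∀ i : ℕ, ∀ z : ℝ, ∑ j ∈ range (n+1),
      ((n.choose j : ℝ) * ((i:ℝ)/n)^j * (1-(i:ℝ)/n)^(n-j)) * z^j
      = (1 - (1-z)*((i:ℝ)/n))^n := by
    intro i z
    have := bin_sum n (((i:ℝ)/n)*z) (1 - (i:ℝ)/n)
    calc ∑ j ∈ range (n+1), ((n.choose j : ℝ) * ((i:ℝ)/n)^j * (1-(i:ℝ)/n)^(n-j)) * z^j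
        = ∑ j ∈ range (n+1), (n.choose j : ℝ) * (((i:ℝ)/n)*z)^j * (1-(i:ℝ)/n)^(n-j) :=
          sum_congr rfl fun j _ => by rw [mul_pow]; ring
      _ = (((i:ℝ)/n)*z + (1 - (i:ℝ)/n))^n := this
      _ = (1 - (1-z)*((i:ℝ)/n))^n := by ring
  -- chain moments
  have hbase : ∀ F : ℕ → ℝ, ∑ j ∈ range (n+1), p 0 j * F j = F N := by
    intro F
    have : ∀ j ∈ range (n+1), p 0 j * F j = if j = N then F N else 0 := by
      intro j _
      rw [h0]
      split
      · rename_i h; rw [h]; ring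
      · ring
    rw [Finset.sum_congr rfl this, Finset.sum_ite_eq' (range (n+1)) N (fun _ => F N), if_pos hNR]
  have hmass : ∀ k, ∑ j ∈ range (n+1), p k j * 1 = 1 := by
    intro k
    induction k with
    | zero => rw [hbase]
    | succ m ih =>
      rw [htrans]
      calc ∑ i ∈ range (n+1), p m i *
            (∑ j ∈ range (n+1), ((n.choose j : ℝ) * ((i:ℝ)/n)^j * (1-(i:ℝ)/n)^(n-j)) * 1)
          = ∑ i ∈ range (n+1), p m i * 1 :=
            sum_congr rfl fun i _ => by rw [fact_mass]
        _ = 1 := ih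
  have hmean : ∀ k, ∑ j ∈ range (n+1), p k j * (j:ℝ) = N := by
    intro k
    induction k with
    | zero => rw [hbase]
    | succ m ih =>
      rw [htrans]
      calc ∑ i ∈ range (n+1), p m i *
            (∑ j ∈ range (n+1), ((n.choose j : ℝ) * ((i:ℝ)/n)^j * (1-(i:ℝ)/n)^(n-j)) * (j:ℝ))
          = ∑ i ∈ range (n+1), p m i * (i:ℝ) :=
            sum_congr rfl fun i _ => by rw [fact_mean]
        _ = N := ih
  have hE2 : ∀ k, ∑ j ∈ range (n+1), p k j * (j:ℝ)^2 ≤ (N:ℝ)^2 + k*N := by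
    intro k
    induction k with
    | zero => rw [hbase]; push_cast; nlinarith [sq_nonneg (N:ℝ)]
    | succ m ih =>
      rw [htrans]
      have step1 : ∑ i ∈ range (n+1), p m i *
            (∑ j ∈ range (n+1), ((n.choose j : ℝ) * ((i:ℝ)/n)^j * (1-(i:ℝ)/n)^(n-j)) * (j:ℝ)^2)
          ≤ ∑ i ∈ range (n+1), p m i * ((i:ℝ)^2 + i) :=
        sum_le_sum fun i hi => mul_le_mul_of_nonneg_left (fact_sq i hi) (hp m i)
      have step2 : ∑ i ∈ range (n+1), p m i * ((i:ℝ)^2 + i)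
          = (∑ i ∈ range (n+1), p m i * (i:ℝ)^2) + ∑ i ∈ range (n+1), p m i * (i:ℝ) := by
        rw [← Finset.sum_add_distrib]
        exact sum_congr rfl fun i _ => by ring
      rw [step2, hmean m] at step1
      calc _ ≤ (∑ i ∈ range (n+1), p m i * (i:ℝ)^2) + (N:ℝ) := step1
        _ ≤ (N:ℝ)^2 + m*N + N := by linarith
        _ = (N:ℝ)^2 + (m+1 : ℕ)*N := by push_cast; ring
  -- g bounds
  have hg : ∀ m, 1 ≤ m → 0 ≤ g m ∧ g m ≤ 1 := by
    intro m hm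
    induction m with
    | zero => omega
    | succ d ih =>
      rcases Nat.eq_or_lt_of_le hm with h | h
      · rw [← h] at *; rw [show g 1 = 1 from hg1]; norm_num
      · have hd : 1 ≤ d := by omega
        obtain ⟨hd0, hd1⟩ := ih hd
        rw [hgrec d hd]
        constructor
        · have : Real.exp (-(g d)) ≤ 1 := by
            rw [Real.exp_le_one_iff]; linarith
          linarith
        · have : 0 < Real.exp (-(g d)) := Real.exp_pos _
          linarith
  have hψnn : ∀ k s, 0 ≤ ∑ j ∈ range (n+1), p k j * Real.exp (-(s*j)) :=
    fun k s => sum_nonneg fun j _ => mul_nonneg (hp k j) (Real.exp_pos _).le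
  -- main step inequality
  have hstepkey : ∀ k : ℕ, ∀ s : ℝ, 0 ≤ s → s ≤ 1 →
      (∑ j ∈ range (n+1), p k j * Real.exp (-(s*j))) * (1 - s^2*((N:ℝ)^2 + k*N)/n)
        ≤ ∑ i ∈ range (n+1), p k i * (1 - s*((i:ℝ)/n))^n := by
    intro k s hs0 hs1
    have pt : ∀ i ∈ range (n+1),
        p k i * (Real.exp (-(s*i)) - s^2/n * ((i:ℝ)^2 * Real.exp (-(s*i))))
          ≤ p k i * (1 - s*((i:ℝ)/n))^n := by
      intro i hi
      apply mul_le_mul_of_nonneg_left _ (hp k i)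
      have hx0 : 0 ≤ s*((i:ℝ)/n) := mul_nonneg hs0 (by positivity)
      have hx1 : s*((i:ℝ)/n) ≤ 1 := by
        calc s*((i:ℝ)/n) ≤ 1*1 := by
              apply mul_le_mul hs1 (hxle i hi) (by positivity) zero_le_one
          _ = 1 := by ring
      have key := pointwise_key (s*((i:ℝ)/n)) hx0 hx1 n
      have e1 : (n:ℝ)*(s*((i:ℝ)/n)) = s*i := by field_simp
      have e2 : (n:ℝ)*(s*((i:ℝ)/n))^2 = s^2*(i:ℝ)^2/n := by field_simp
      rw [e1, e2] at key
      calc Real.exp (-(s*i)) - s^2/n * ((i:ℝ)^2 * Real.exp (-(s*i)))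
          = Real.exp (-(s*i)) * (1 - s^2*(i:ℝ)^2/n) := by ring
        _ ≤ (1 - s*((i:ℝ)/n))^n := key
    have sum_pt := sum_le_sum pt
    have split : ∑ i ∈ range (n+1),
        p k i * (Real.exp (-(s*i)) - s^2/n * ((i:ℝ)^2 * Real.exp (-(s*i))))
        = (∑ i ∈ range (n+1), p k i * Real.exp (-(s*i)))
          - s^2/n * ∑ i ∈ range (n+1), p k i * ((i:ℝ)^2 * Real.exp (-(s*i))) := by
      rw [Finset.mul_sum, ← Finset.sum_sub_distrib]
      exact sum_congr rfl fun i _ => by ring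
    rw [split] at sum_pt
    -- Chebyshev
    have hch := cheb (range (n+1)) (p k) (fun i => (i:ℝ)^2) (fun i => Real.exp (-(s*i)))
      (fun i _ => hp k i) (by simpa using hmass k) ?_
    · have hE2' := hE2 k
      have hψ := hψnn k s
      have hbound : ∑ i ∈ range (n+1), p k i * ((i:ℝ)^2 * Real.exp (-(s*i)))
          ≤ ((N:ℝ)^2 + k*N) * ∑ i ∈ range (n+1), p k i * Real.exp (-(s*i)) := by
        calc ∑ i ∈ range (n+1), p k i * ((i:ℝ)^2 * Real.exp (-(s*i)))
            ≤ (∑ i ∈ range (n+1), p k i * (i:ℝ)^2)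
              * (∑ i ∈ range (n+1), p k i * Real.exp (-(s*i))) := hch
          _ ≤ ((N:ℝ)^2 + k*N) * ∑ i ∈ range (n+1), p k i * Real.exp (-(s*i)) :=
              mul_le_mul_of_nonneg_right hE2' hψ
      have hcoef : 0 ≤ s^2/n := by positivity
      have := mul_le_mul_of_nonneg_left hbound hcoef
      calc (∑ j ∈ range (n+1), p k j * Real.exp (-(s*j))) * (1 - s^2*((N:ℝ)^2 + k*N)/n)
          = (∑ j ∈ range (n+1), p k j * Real.exp (-(s*j)))
            - s^2/n * (((N:ℝ)^2 + k*N) * ∑ i ∈ range (n+1), p k i * Real.exp (-(s*i))) := by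
            ring
        _ ≤ (∑ i ∈ range (n+1), p k i * Real.exp (-(s*i)))
            - s^2/n * ∑ i ∈ range (n+1), p k i * ((i:ℝ)^2 * Real.exp (-(s*i))) := by linarith
        _ ≤ _ := sum_pt
    · intro i _ j _
      rcases le_total i j with hij | hij
      · have hf : (i:ℝ)^2 ≤ (j:ℝ)^2 := by
          have : (i:ℝ) ≤ j := by exact_mod_cast hij
          nlinarith [Nat.cast_nonneg (α := ℝ) i]
        have hh : Real.exp (-(s*j)) ≤ Real.exp (-(s*i)) := by
          apply Real.exp_le_exp.2
          have h' : (i:ℝ) ≤ j := by exact_mod_cast hij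
          have := mul_le_mul_of_nonneg_left h' hs0
          linarith
        nlinarith [hf, hh, mul_nonneg (sub_nonneg.2 hf) (sub_nonneg.2 hh)]
      · have hf : (j:ℝ)^2 ≤ (i:ℝ)^2 := by
          have : (j:ℝ) ≤ i := by exact_mod_cast hij
          nlinarith [Nat.cast_nonneg (α := ℝ) j]
        have hh : Real.exp (-(s*i)) ≤ Real.exp (-(s*j)) := by
          apply Real.exp_le_exp.2
          have h' : (j:ℝ) ≤ i := by exact_mod_cast hij
          have := mul_le_mul_of_nonneg_left h' hs0
          linarith
        exact mul_nonneg (by linarith) (by linarith)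
  -- mgf transition step
  have hψstep : ∀ k m, 1 ≤ m →
      (∑ j ∈ range (n+1), p k j * Real.exp (-(g (m+1) * j))) * (1 - (g (m+1))^2*((N:ℝ)^2 + k*N)/n)
        ≤ ∑ j ∈ range (n+1), p (k+1) j * Real.exp (-(g m * j)) := by
    intro k m hm
    have hs : g (m+1) = 1 - Real.exp (-(g m)) := hgrec m hm
    obtain ⟨hs0, hs1⟩ := hg (m+1) (by omega)
    have trans : ∑ j ∈ range (n+1), p (k+1) j * Real.exp (-(g m * j))
        = ∑ i ∈ range (n+1), p k i * (1 - g (m+1) * ((i:ℝ)/n))^n := by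
      rw [htrans k (fun j => Real.exp (-(g m * j)))]
      apply sum_congr rfl
      intro i _
      congr 1
      have hz := fact_mgf i (Real.exp (-(g m)))
      calc ∑ j ∈ range (n+1),
            ((n.choose j : ℝ) * ((i:ℝ)/n)^j * (1-(i:ℝ)/n)^(n-j)) * Real.exp (-(g m * j))
          = ∑ j ∈ range (n+1),
            ((n.choose j : ℝ) * ((i:ℝ)/n)^j * (1-(i:ℝ)/n)^(n-j)) * (Real.exp (-(g m)))^j := by
            apply sum_congr rfl
            intro j _
            congr 1
            rw [show -(g m * (j:ℝ)) = (j:ℝ) * (-(g m)) by ring, Real.exp_nat_mul]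
        _ = (1 - (1 - Real.exp (-(g m)))*((i:ℝ)/n))^n := hz
        _ = (1 - g (m+1) * ((i:ℝ)/n))^n := by rw [hs]
    rw [trans]
    exact hstepkey k (g (m+1)) hs0 hs1
  -- absorption step
  have hp0step : ∀ k, (∑ j ∈ range (n+1), p k j * Real.exp (-((1:ℝ) * j)))
      * (1 - (1:ℝ)^2*((N:ℝ)^2 + k*N)/n) ≤ p (k+1) 0 := by
    intro k
    have trans : p (k+1) 0 = ∑ i ∈ range (n+1), p k i * (1 - (1:ℝ)*((i:ℝ)/n))^n := by
      rw [hstep k 0]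
      apply sum_congr rfl
      intro i _
      congr 1
      simp [Nat.choose_zero_right]
    rw [trans]
    exact hstepkey k 1 zero_le_one le_rfl
  -- main argument
  intro K hK
  rw [show (-(n : ℝ) * p₀ * g K) = -(g K * N) from by rw [hN]; ring,
    show ((((n : ℝ) * p₀) ^ 2 + (n : ℝ) * p₀ * K) : ℝ) = ((N:ℝ)^2 + K*N) from by rw [hN]; ring]
  rcases le_or_gt (1 - ((N:ℝ)^2 + K*N)/n * ∑ m ∈ Finset.Icc 1 K, (g m)^2) 0 with hneg | hpos
  · have h1 := Real.exp_pos (-(g K * (N:ℝ)))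
    have h2 : 0 ≤ Real.exp (-(g K * (N:ℝ))) * (-(1 - ((N:ℝ)^2 + K*N)/n * ∑ m ∈ Finset.Icc 1 K, (g m)^2)) :=
      mul_nonneg h1.le (by linarith)
    have := hp K 0
    rw [ge_iff_le]
    nlinarith [h2, this]
  · have hcnn : 0 ≤ ((N:ℝ)^2 + (K:ℝ)*N)/n := by positivity
    have hsq_nn : ∀ m ∈ Finset.Icc 1 K, 0 ≤ (g m)^2 := fun m _ => sq_nonneg _
    have ha1 : ∀ m ∈ Finset.Icc 1 K, (g m)^2 * (((N:ℝ)^2 + K*N)/n) ≤ 1 := by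
      intro m hm
      have hle := Finset.single_le_sum hsq_nn hm
      have := mul_le_mul_of_nonneg_right hle hcnn
      nlinarith
    have ha0 : ∀ m ∈ Finset.Icc 1 K, 0 ≤ (g m)^2 * (((N:ℝ)^2 + K*N)/n) :=
      fun m _ => mul_nonneg (sq_nonneg _) hcnn
    have claim : ∀ d, 1 ≤ d → d ≤ K →
        (∑ j ∈ range (n+1), p (K-d) j * Real.exp (-(g d * j)))
          * (∏ m ∈ Finset.Icc 1 d, (1 - (g m)^2 * (((N:ℝ)^2 + K*N)/n))) ≤ p K 0 := by
      intro d hd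
      induction d, hd using Nat.le_induction with
      | base =>
        intro _
        have hK1 : K - 1 + 1 = K := Nat.sub_add_cancel hK
        have h1 := hp0step (K-1)
        rw [hK1] at h1
        have hψ := hψnn (K-1) 1
        have hcle : ((N:ℝ)^2 + ((K-1:ℕ):ℝ)*N)/n ≤ ((N:ℝ)^2 + (K:ℝ)*N)/n := by
          gcongr
          exact_mod_cast Nat.sub_le K 1
        calc (∑ j ∈ range (n+1), p (K-1) j * Real.exp (-(g 1 * j)))
              * (∏ m ∈ Finset.Icc 1 1, (1 - (g m)^2 * (((N:ℝ)^2 + K*N)/n)))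
            = (∑ j ∈ range (n+1), p (K-1) j * Real.exp (-((1:ℝ) * j)))
              * (1 - (1:ℝ)^2 * (((N:ℝ)^2 + K*N)/n)) := by
              rw [Finset.Icc_self, Finset.prod_singleton, hg1]
          _ ≤ (∑ j ∈ range (n+1), p (K-1) j * Real.exp (-((1:ℝ) * j)))
              * (1 - (1:ℝ)^2*((N:ℝ)^2 + ((K-1:ℕ):ℝ)*N)/n) := by
              apply mul_le_mul_of_nonneg_left _ hψ
              ring_nf
              ring_nf at hcle
              linarith
          _ ≤ p K 0 := h1
      | succ d hd ih =>
        intro hdK1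
        have hdK : d ≤ K := le_trans (Nat.le_succ d) hdK1
        have ih' := ih hdK
        have hsub : K - d = (K - (d+1)) + 1 := by omega
        have hstep' := hψstep (K-(d+1)) d hd
        rw [← hsub] at hstep'
        have hA := hψnn (K-(d+1)) (g (d+1))
        have hcle : ((N:ℝ)^2 + ((K-(d+1):ℕ):ℝ)*N)/n ≤ ((N:ℝ)^2 + (K:ℝ)*N)/n := by
          gcongr
          exact_mod_cast Nat.sub_le K (d+1)
        have hAB : (∑ j ∈ range (n+1), p (K-(d+1)) j * Real.exp (-(g (d+1) * j)))
            * (1 - (g (d+1))^2 * (((N:ℝ)^2 + K*N)/n))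
            ≤ ∑ j ∈ range (n+1), p (K-d) j * Real.exp (-(g d * j)) := by
          refine le_trans ?_ hstep'
          apply mul_le_mul_of_nonneg_left _ hA
          have hmul := mul_le_mul_of_nonneg_left hcle (sq_nonneg (g (d+1)))
          ring_nf
          ring_nf at hmul
          linarith
        have hPnn : 0 ≤ ∏ m ∈ Finset.Icc 1 d, (1 - (g m)^2 * (((N:ℝ)^2 + K*N)/n)) := by
          apply Finset.prod_nonneg
          intro m hm
          have hm' : m ∈ Finset.Icc 1 K := by
            simp only [Finset.mem_Icc] at hm ⊢
            omega
          linarith [ha1 m hm']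
        calc (∑ j ∈ range (n+1), p (K-(d+1)) j * Real.exp (-(g (d+1) * j)))
              * (∏ m ∈ Finset.Icc 1 (d+1), (1 - (g m)^2 * (((N:ℝ)^2 + K*N)/n)))
            = ((∑ j ∈ range (n+1), p (K-(d+1)) j * Real.exp (-(g (d+1) * j)))
              * (1 - (g (d+1))^2 * (((N:ℝ)^2 + K*N)/n)))
              * (∏ m ∈ Finset.Icc 1 d, (1 - (g m)^2 * (((N:ℝ)^2 + K*N)/n))) := by
              rw [Finset.prod_Icc_succ_top (by omega : 1 ≤ d+1)]
              ring
          _ ≤ (∑ j ∈ range (n+1), p (K-d) j * Real.exp (-(g d * j)))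
              * (∏ m ∈ Finset.Icc 1 d, (1 - (g m)^2 * (((N:ℝ)^2 + K*N)/n))) :=
              mul_le_mul_of_nonneg_right hAB hPnn
          _ ≤ p K 0 := ih'
    have hfinal := claim K hK le_rfl
    rw [Nat.sub_self] at hfinal
    rw [hbase (fun j => Real.exp (-(g K * j)))] at hfinal
    have hw := weier (Finset.Icc 1 K) (fun m => (g m)^2 * (((N:ℝ)^2 + K*N)/n)) ha0 ha1
    have hsum_eq : ∑ m ∈ Finset.Icc 1 K, (g m)^2 * (((N:ℝ)^2 + K*N)/n)
        = ((N:ℝ)^2 + K*N)/n * ∑ m ∈ Finset.Icc 1 K, (g m)^2 := by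
      rw [Finset.mul_sum]
      exact sum_congr rfl fun m _ => by ring
    rw [hsum_eq] at hw
    have hexp : (0:ℝ) ≤ Real.exp (-(g K * N)) := (Real.exp_pos _).le
    rw [ge_iff_le]
    calc Real.exp (-(g K * N)) * (1 - ((N:ℝ)^2 + K*N)/n * ∑ m ∈ Finset.Icc 1 K, (g m)^2)
        ≤ Real.exp (-(g K * N)) * (∏ m ∈ Finset.Icc 1 K, (1 - (g m)^2 * (((N:ℝ)^2 + K*N)/n))) :=
          mul_le_mul_of_nonneg_left hw hexp
      _ ≤ p K 0 := hfinal
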